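/- For indeterminates A_1,...,A_n, B_1,...,B_n, the identity A_1⋯A_n − B_1⋯B_n = (1/2^{n-1}) · Σ_{e ∈ E₋ⁿ} ∏_{i=1}^n (A_i + e_i B_i) holds, where E₋ⁿ is the set of vectors e ∈ {-1,1}ⁿ with an odd number of components equal to -1. -/

import Mathlib

open Finset

theorem prod_sub_prod_eq_sum_odd_signs
    (R : Type*) [CommRing R] [Algebra ℚ R] (n : ℕ) (hn : 1 ≤ n)
    (A B : Fin n → R) :
    (∏ i, A i) - (∏ i, B i) =
      ((1 / 2 ^ (n - 1) : ℚ)) •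
        ∑ e ∈ Finset.univ.filter
            (fun e : Fin n → Bool => Odd (Finset.univ.filter (fun i => e i = true)).card),
          ∏ i, (A i + (if e i then -1 else 1) * B i) := by
  classical
  set P : (Fin n → Bool) → Prop :=
    fun e => Odd (Finset.univ.filter (fun i => e i = true)).card with hP
  set f : (Fin n → Bool) → R :=
    fun e => ∏ i, (A i + (if e i then -1 else 1) * B i) with hf
  -- sum over all e
  have key1 : (∑ e : Fin n → Bool, f e) = 2 ^ n * ∏ i, A i := by
    have h := Finset.prod_univ_sum (κ := fun _ : Fin n => Bool)
      (t := fun _ => (Finset.univ : Finset Bool))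
      (f := fun i b => A i + (if b then -1 else 1) * B i)
    rw [Fintype.piFinset_univ] at h
    rw [hf, ← h]
    have : ∀ i : Fin n, (∑ b : Bool, (A i + (if b then -1 else 1) * B i)) = 2 * A i := by
      intro i; simp [Fintype.sum_bool]; ring
    rw [Finset.prod_congr rfl (fun i _ => this i), Finset.prod_mul_distrib,
      Finset.prod_const, Finset.card_univ, Fintype.card_fin]
  have key2 : (∑ e : Fin n → Bool, (-1 : R) ^ (Finset.univ.filter (fun i => e i = true)).card * f e)
      = 2 ^ n * ∏ i, B i := by
    have hsign : ∀ e : Fin n → Bool,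
        (-1 : R) ^ (Finset.univ.filter (fun i => e i = true)).card
          = ∏ i, (if e i then (-1 : R) else 1) := by
      intro e
      rw [Finset.prod_ite, Finset.prod_const, Finset.prod_const, one_pow, mul_one]
    have h := Finset.prod_univ_sum (κ := fun _ : Fin n => Bool)
      (t := fun _ => (Finset.univ : Finset Bool))
      (f := fun i b => (if b then (-1 : R) else 1) * (A i + (if b then -1 else 1) * B i))
    rw [Fintype.piFinset_univ] at h
    have h2 : (∑ e : Fin n → Bool, (-1 : R) ^ (Finset.univ.filter (fun i => e i = true)).card * f e)
        = ∑ e : Fin n → Bool, ∏ i, ((if e i then (-1 : R) else 1) * (A i + (if e i then -1 else 1) * B i)) := by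
      refine Finset.sum_congr rfl fun e _ => ?_
      rw [hsign e, hf, ← Finset.prod_mul_distrib]
    rw [h2, ← h]
    have : ∀ i : Fin n, (∑ b : Bool, (if b then (-1 : R) else 1) * (A i + (if b then -1 else 1) * B i)) = 2 * B i := by
      intro i; simp [Fintype.sum_bool]; ring
    rw [Finset.prod_congr rfl (fun i _ => this i), Finset.prod_mul_distrib,
      Finset.prod_const, Finset.card_univ, Fintype.card_fin]
  set S := ∑ e ∈ Finset.univ.filter P, f e with hS
  set T := ∑ e ∈ Finset.univ.filter (fun e => ¬ P e), f e with hT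
  have hs1 : S + T = 2 ^ n * ∏ i, A i := by
    rw [hS, hT, Finset.sum_filter_add_sum_filter_not, key1]
  have hs2 : T - S = 2 ^ n * ∏ i, B i := by
    rw [← key2, ← Finset.sum_filter_add_sum_filter_not Finset.univ P]
    rw [hS, hT]
    have hOdd : ∑ e ∈ Finset.univ.filter P,
        (-1 : R) ^ (Finset.univ.filter (fun i => e i = true)).card * f e = -S := by
      rw [hS, ← Finset.sum_neg_distrib]
      refine Finset.sum_congr rfl fun e he => ?_
      have : P e := (Finset.mem_filter.mp he).2
      rw [Odd.neg_one_pow this, neg_one_mul]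
    have hEven : ∑ e ∈ Finset.univ.filter (fun e => ¬ P e),
        (-1 : R) ^ (Finset.univ.filter (fun i => e i = true)).card * f e = T := by
      rw [hT]
      refine Finset.sum_congr rfl fun e he => ?_
      have hne : ¬ P e := (Finset.mem_filter.mp he).2
      rw [Even.neg_one_pow (Nat.not_odd_iff_even.mp hne), one_mul]
    rw [hOdd, hEven]; ring
  -- combine: 2 * S = 2^n * (∏ A - ∏ B)
  have hcomb : (2 : R) * S = 2 ^ n * ((∏ i, A i) - ∏ i, B i) := by
    have := congrArg₂ (· - ·) hs1 hs2
    try simp only at this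
    linear_combination this
  -- move to ℚ-smul
  have hsm : ((2 : ℚ)) • S = ((2 ^ n : ℚ)) • ((∏ i, A i) - ∏ i, B i) := by
    rw [Algebra.smul_def, Algebra.smul_def, map_pow, map_ofNat]
    push_cast
    simpa using hcomb
  have h2n : (2 ^ n : ℚ) = 2 * 2 ^ (n - 1) := by
    rw [← pow_succ']
    congr 1
    omega
  have := congrArg (fun x => ((1 / 2 ^ (n - 1) : ℚ) * (1 / 2 : ℚ)) • x) hsm
  simp only [smul_smul] at this
  rw [show ((1 / 2 ^ (n - 1) : ℚ) * (1 / 2) * 2) = (1 / 2 ^ (n - 1) : ℚ) by ring,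
    h2n] at this
  rw [show ((1 / 2 ^ (n - 1) : ℚ) * (1 / 2) * (2 * 2 ^ (n - 1))) = 1 by
    field_simp] at this
  rw [one_smul] at this
  exact this.symm
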